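/- There exists c₂ < ∞, depending only on c₀ and ν, such that for all sufficiently large β and every integer y ≥ 0: ∑_{m=1}^∞ P_{β,0}( Z_k ≥ 0 for all 1 ≤ k ≤ m, and Z_m = y ) ≤ c₂·(y+1)/p_β. -/

import Mathlib

open scoped ENNReal Classical
open MeasureTheory

/-- `P_{β,0}(Z_k ≥ 0 for all 1 ≤ k ≤ m, Z_m = y)` for the random walk
`Z_k = x_1 + ⋯ + x_k` whose i.i.d. steps have law `μ`, written as a sum over the first
`m` steps `x : Fin m → ℤ`. -/
noncomputable def nonnegPathProb (μ : Measure ℤ) (m : ℕ) (y : ℤ) : ℝ≥0∞ :=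
  ∑' x : Fin m → ℤ, (∏ i, μ {x i}) *
    (if (∀ k, 1 ≤ k → k ≤ m →
          (0 : ℤ) ≤ ∑ i : Fin m, (if (i : ℕ) < k then x i else 0)) ∧
        (∑ i : Fin m, x i) = y
      then 1 else 0)

namespace NonnegWalkAux

/-- Partial sum of the first `k` steps. -/
def ps {m : ℕ} (x : Fin m → ℤ) (k : ℕ) : ℤ :=
  ∑ i : Fin m, (if (i : ℕ) < k then x i else 0)

lemma ps_zero {m : ℕ} (x : Fin m → ℤ) : ps x 0 = 0 := by simp [ps]

lemma ps_of_le {m k : ℕ} (x : Fin m → ℤ) (h : m ≤ k) : ps x k = ∑ i, x i := by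
  unfold ps
  refine Finset.sum_congr rfl fun i _ => ?_
  rw [if_pos (lt_of_lt_of_le i.isLt h)]

lemma ps_stable {m k : ℕ} (x : Fin m → ℤ) (h : m ≤ k) : ps x k = ps x m := by
  rw [ps_of_le x h, ps_of_le x le_rfl]

lemma ps_snoc {m : ℕ} (x : Fin m → ℤ) (z : ℤ) (k : ℕ) :
    ps (Fin.snoc x z) k = ps x k + (if m < k then z else 0) := by
  unfold ps
  rw [Fin.sum_univ_castSucc]
  simp [Fin.snoc_castSucc, Fin.snoc_last]

lemma ps_rev {m : ℕ} (x : Fin m → ℤ) {k : ℕ} (hk : k ≤ m) :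
    ps (x ∘ Fin.rev) k = ps x m - ps x (m - k) := by
  have h1 : ps (x ∘ Fin.rev) k
      = ∑ i : Fin m, (if ¬ ((i : ℕ) < m - k) then x i else 0) := by
    unfold ps
    rw [← Equiv.sum_comp Fin.revPerm
      (fun i : Fin m => if ((i : ℕ)) < k then (x ∘ Fin.rev) i else 0)]
    refine Finset.sum_congr rfl fun i _ => ?_
    have hi := i.isLt
    simp only [Fin.revPerm_apply, Function.comp_apply, Fin.rev_rev, Fin.val_rev]
    refine if_congr ?_ rfl rfl
    omega
  rw [h1]
  have h2 : ∀ i : Fin m,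
      (if ¬ ((i : ℕ) < m - k) then x i else 0)
        = x i - (if (i : ℕ) < m - k then x i else 0) := by
    intro i; by_cases h : (i : ℕ) < m - k <;> simp [h]
  rw [Finset.sum_congr rfl fun i _ => h2 i, Finset.sum_sub_distrib,
    ps_of_le x le_rfl]
  rfl

/-- Reversal of a path as an equivalence. -/
def revArrow (m : ℕ) : (Fin m → ℤ) ≃ (Fin m → ℤ) where
  toFun x := x ∘ Fin.rev
  invFun x := x ∘ Fin.rev
  left_inv x := by funext i; simp [Fin.rev_rev]
  right_inv x := by funext i; simp [Fin.rev_rev]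

def snocEquiv (m : ℕ) : ((Fin m → ℤ) × ℤ) ≃ (Fin (m + 1) → ℤ) where
  toFun p := Fin.snoc p.1 p.2
  invFun f := (Fin.init f, f (Fin.last m))
  left_inv p := by simp
  right_inv f := by simp [Fin.snoc_init_self]

lemma tsum_succ {m : ℕ} (f : (Fin (m + 1) → ℤ) → ℝ≥0∞) :
    ∑' x : Fin (m + 1) → ℤ, f x
      = ∑' (x : Fin m → ℤ), ∑' z : ℤ, f (Fin.snoc x z) := by
  rw [← (snocEquiv m).tsum_eq f]
  exact ENNReal.tsum_prod' (f := fun p => f (Fin.snoc p.1 p.2))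

lemma W_snoc (μ : Measure ℤ) {m : ℕ} (x : Fin m → ℤ) (z : ℤ) :
    (∏ i : Fin (m + 1), μ {(Fin.snoc x z : Fin (m + 1) → ℤ) i})
      = (∏ i : Fin m, μ {x i}) * μ {z} := by
  rw [Fin.prod_univ_castSucc]
  simp

lemma measure_eq_tsum (μ : Measure ℤ) (s : Set ℤ) :
    ∑' z : ℤ, μ {z} * (if z ∈ s then 1 else 0) = μ s := by
  have h : ∀ z : ℤ, μ {z} * (if z ∈ s then 1 else 0) = μ ({z} ∩ s) := by
    intro z
    by_cases hz : z ∈ s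
    · rw [Set.inter_eq_left.mpr (Set.singleton_subset_iff.mpr hz), if_pos hz, mul_one]
    · rw [Set.singleton_inter_eq_empty.mpr hz, if_neg hz, mul_zero, measure_empty]
  rw [tsum_congr h]
  rw [← measure_iUnion (fun a b hab => (Set.disjoint_singleton.mpr hab).mono
      Set.inter_subset_left Set.inter_subset_left)
      (fun z => MeasurableSet.of_discrete)]
  congr 1
  rw [← Set.iUnion_inter, Set.iUnion_of_singleton, Set.univ_inter]

lemma tsum_singleton_one (μ : Measure ℤ) [IsProbabilityMeasure μ] :
    ∑' z : ℤ, μ {z} = 1 := by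
  have := measure_eq_tsum μ Set.univ
  simpa using this

def condA (m : ℕ) (y : ℤ) (x : Fin m → ℤ) : Prop :=
  (∀ k, 1 ≤ k → k ≤ m →
    (0 : ℤ) ≤ ∑ i : Fin m, (if (i : ℕ) < k then x i else 0)) ∧
  (∑ i : Fin m, x i) = y

def condB (m : ℕ) (y : ℤ) (x : Fin m → ℤ) : Prop :=
  (∀ k ≤ m, ps x k ≤ y) ∧ ps x m = y

def condT (m : ℕ) (y : ℤ) (x : Fin m → ℤ) : Prop := ∀ k ≤ m, ps x k ≤ y

noncomputable def PB (μ : Measure ℤ) (m : ℕ) (y : ℤ) : ℝ≥0∞ :=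
  ∑' x : Fin m → ℤ, (∏ i, μ {x i}) * (if condB m y x then 1 else 0)

noncomputable def PT (μ : Measure ℤ) (m : ℕ) (y : ℤ) : ℝ≥0∞ :=
  ∑' x : Fin m → ℤ, (∏ i, μ {x i}) * (if condT m y x then 1 else 0)

lemma condB_rev_iff {m : ℕ} {y : ℤ} (hy : 0 ≤ y) (x : Fin m → ℤ) :
    condB m y (x ∘ Fin.rev) ↔ condA m y x := by
  unfold condA condB
  have hsum : (∑ i, x i) = ps x m := (ps_of_le x le_rfl).symm
  have hend : ps (x ∘ Fin.rev) m = ps x m := by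
    rw [ps_rev x le_rfl, Nat.sub_self, ps_zero, sub_zero]
  constructor
  · rintro ⟨hb, he⟩
    rw [hend] at he
    refine ⟨fun k hk1 hkm => ?_, by rw [hsum]; exact he⟩
    have h := hb (m - k) (Nat.sub_le _ _)
    rw [ps_rev x (Nat.sub_le _ _)] at h
    have hmk : m - (m - k) = k := by omega
    rw [hmk, he] at h
    show (0 : ℤ) ≤ ps x k
    omega
  · rintro ⟨ha, he⟩
    rw [hsum] at he
    refine ⟨fun k hk => ?_, by rw [hend]; exact he⟩
    rw [ps_rev x hk]
    rcases Nat.eq_zero_or_pos (m - k) with h0 | hpos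
    · rw [h0, ps_zero, he]; omega
    · have h : (0 : ℤ) ≤ ps x (m - k) := ha (m - k) hpos (Nat.sub_le _ _)
      rw [he]; omega

lemma nonnegPathProb_eq_PB (μ : Measure ℤ) (m : ℕ) (y : ℤ) (hy : 0 ≤ y) :
    nonnegPathProb μ m y = PB μ m y := by
  unfold nonnegPathProb PB
  rw [← Equiv.tsum_eq (revArrow m)
    (fun x => (∏ i, μ {x i}) * (if condB m y x then 1 else 0))]
  refine tsum_congr fun x => ?_
  have hw : (∏ i, μ {(revArrow m x) i}) = ∏ i, μ {x i} :=
    Equiv.prod_comp Fin.revPerm (fun i => μ {x i})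
  rw [hw]
  have hcond : condB m y (revArrow m x) ↔ condA m y x := condB_rev_iff hy x
  by_cases hA : (∀ k, 1 ≤ k → k ≤ m →
      (0 : ℤ) ≤ ∑ i : Fin m, (if (i : ℕ) < k then x i else 0)) ∧
      (∑ i : Fin m, x i) = y
  · rw [if_pos hA, if_pos (hcond.mpr hA)]
  · rw [if_neg hA, if_neg (fun h => hA (hcond.mp h))]

lemma PT_zero (μ : Measure ℤ) (y : ℤ) (hy : 0 ≤ y) : PT μ 0 y = 1 := by
  unfold PT
  rw [tsum_eq_single (fun i : Fin 0 => (0 : ℤ))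
    (fun b hb => absurd (funext fun i => i.elim0) (Ne.symm hb))]
  have hc : condT 0 y (fun _ : Fin 0 => (0 : ℤ)) := by
    intro k hk
    interval_cases k
    rw [ps_zero]; exact hy
  rw [if_pos hc]
  simp

lemma step (μ : Measure ℤ) [IsProbabilityMeasure μ] (m : ℕ) (y : ℤ) :
    PT μ (m + 1) y + PB μ m y * μ {z : ℤ | 1 ≤ z} ≤ PT μ m y := by
  have hT1 : PT μ (m + 1) y = ∑' (x : Fin m → ℤ), ∑' z : ℤ,
      ((∏ i, μ {x i}) * μ {z}) *
        (if condT m y x ∧ ps x m + z ≤ y then 1 else 0) := by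
    unfold PT
    rw [tsum_succ]
    refine tsum_congr fun x => tsum_congr fun z => ?_
    rw [W_snoc]
    refine congrArg (fun t => (∏ i, μ {x i}) * μ {z} * t) ?_
    refine if_congr ?_ rfl rfl
    unfold condT
    constructor
    · intro h
      refine ⟨fun k hk => ?_, ?_⟩
      · have h' := h k (le_trans hk (Nat.le_succ m))
        rw [ps_snoc, if_neg (by omega), add_zero] at h'
        exact h'
      · have h' := h (m + 1) le_rfl
        rw [ps_snoc, if_pos (by omega), ps_stable x (Nat.le_succ m)] at h'
        exact h'
    · rintro ⟨h1, h2⟩ k hk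
      rcases Nat.lt_or_ge k (m + 1) with hk' | hk'
      · rw [ps_snoc, if_neg (by omega), add_zero]
        exact h1 k (by omega)
      · have hkm : k = m + 1 := by omega
        subst hkm
        rw [ps_snoc, if_pos (by omega), ps_stable x (Nat.le_succ m)]
        exact h2
  have hB : PB μ m y * μ {z : ℤ | 1 ≤ z} = ∑' (x : Fin m → ℤ), ∑' z : ℤ,
      ((∏ i, μ {x i}) * μ {z}) *
        (if condB m y x ∧ 1 ≤ z then 1 else 0) := by
    unfold PB
    rw [← ENNReal.tsum_mul_right]
    refine tsum_congr fun x => ?_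
    rw [← measure_eq_tsum μ {z | 1 ≤ z}, ← ENNReal.tsum_mul_left]
    refine tsum_congr fun z => ?_
    by_cases hb : condB m y x <;> by_cases hz : (1 : ℤ) ≤ z <;>
      simp [hb, hz, Set.mem_setOf_eq, mul_comm, mul_assoc, mul_left_comm]
  rw [hT1, hB, ← ENNReal.tsum_add]
  have hpt : PT μ m y = ∑' (x : Fin m → ℤ), ∑' z : ℤ,
      ((∏ i, μ {x i}) * μ {z}) * (if condT m y x then 1 else 0) := by
    unfold PT
    refine tsum_congr fun x => ?_
    rw [tsum_congr (fun z : ℤ => show ((∏ i, μ {x i}) * μ {z}) *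
        (if condT m y x then 1 else 0)
        = μ {z} * ((∏ i, μ {x i}) * (if condT m y x then 1 else 0)) by ring)]
    rw [ENNReal.tsum_mul_right, tsum_singleton_one μ, one_mul]
  rw [hpt]
  refine ENNReal.tsum_le_tsum fun x => ?_
  rw [← ENNReal.tsum_add]
  refine ENNReal.tsum_le_tsum fun z => ?_
  set c := (∏ i, μ {x i}) * μ {z}
  by_cases hR : condT m y x
  · by_cases hz : ps x m + z ≤ y
    · have hP : condT m y x ∧ ps x m + z ≤ y := ⟨hR, hz⟩
      have hQ : ¬ (condB m y x ∧ 1 ≤ z) := by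
        rintro ⟨⟨_, he⟩, hz1⟩
        omega
      simp [hP, hQ, hR]
    · have hP : ¬ (condT m y x ∧ ps x m + z ≤ y) := fun h => hz h.2
      by_cases hQ : condB m y x ∧ 1 ≤ z
      · simp [hP, hQ, hR, hz]
      · simp [hP, hQ, hR, hz]
  · have hP : ¬ (condT m y x ∧ ps x m + z ≤ y) := fun h => hR h.1
    have hQ : ¬ (condB m y x ∧ 1 ≤ z) := fun h => hR h.1.1
    simp [hP, hQ, hR]

lemma main_ind (μ : Measure ℤ) [IsProbabilityMeasure μ] (y : ℤ) (hy : 0 ≤ y)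
    (M : ℕ) :
    PT μ M y + (∑ m ∈ Finset.range M, PB μ m y) * μ {z : ℤ | 1 ≤ z} ≤ 1 := by
  induction M with
  | zero => simp [PT_zero μ y hy]
  | succ M ih =>
      have h1 : PT μ (M + 1) y
          + (∑ m ∈ Finset.range (M + 1), PB μ m y) * μ {z : ℤ | 1 ≤ z}
          = (PT μ (M + 1) y + PB μ M y * μ {z : ℤ | 1 ≤ z})
            + (∑ m ∈ Finset.range M, PB μ m y) * μ {z : ℤ | 1 ≤ z} := by
        rw [Finset.sum_range_succ, add_mul]; ring
      rw [h1]
      exact le_trans (add_le_add_left (step μ M y) _) ih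

lemma tsum_PB_le (μ : Measure ℤ) [IsProbabilityMeasure μ] (y : ℤ) (hy : 0 ≤ y) :
    ∑' m : ℕ, PB μ (m + 1) y ≤ (μ {z : ℤ | 1 ≤ z})⁻¹ := by
  have key : ∀ M : ℕ, ∑ m ∈ Finset.range M, PB μ m y ≤ (μ {z : ℤ | 1 ≤ z})⁻¹ := by
    intro M
    rw [ENNReal.le_inv_iff_mul_le]
    calc (∑ m ∈ Finset.range M, PB μ m y) * μ {z : ℤ | 1 ≤ z}
        ≤ PT μ M y + (∑ m ∈ Finset.range M, PB μ m y) * μ {z : ℤ | 1 ≤ z} :=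
          le_add_self
      _ ≤ 1 := main_ind μ y hy M
  rw [ENNReal.tsum_eq_iSup_sum]
  refine iSup_le fun s => ?_
  set M := s.sup id + 1 with hM
  have hsub : s ⊆ Finset.range M := by
    intro m hm
    exact Finset.mem_range.mpr (lt_of_le_of_lt (Finset.le_sup (f := id) hm)
      (Nat.lt_succ_self _))
  calc ∑ m ∈ s, PB μ (m + 1) y
      ≤ ∑ m ∈ Finset.range M, PB μ (m + 1) y :=
        Finset.sum_le_sum_of_subset hsub
    _ = ∑ m ∈ Finset.Ico 1 (M + 1), PB μ m y := by
        rw [Finset.sum_Ico_eq_sum_range]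
        simp only [Nat.add_sub_cancel]
        exact Finset.sum_congr rfl fun m _ => by rw [add_comm]
    _ ≤ ∑ m ∈ Finset.range (M + 1), PB μ m y := by
        refine Finset.sum_le_sum_of_subset ?_
        intro m hm
        rw [Finset.mem_Ico] at hm
        exact Finset.mem_range.mpr hm.2
    _ ≤ (μ {z : ℤ | 1 ≤ z})⁻¹ := key (M + 1)

lemma half (μ : Measure ℤ) (hs : Measure.map (fun z : ℤ => -z) μ = μ) :
    μ {z : ℤ | z ≠ 0} = 2 * μ {z : ℤ | 1 ≤ z} := by
  have hneg : μ {z : ℤ | z ≤ -1} = μ {z : ℤ | 1 ≤ z} := by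
    conv_lhs => rw [← hs]
    rw [Measure.map_apply Measurable.of_discrete MeasurableSet.of_discrete]
    congr 1
    ext z
    simp only [Set.mem_preimage, Set.mem_setOf_eq]
    omega
  have hset : {z : ℤ | z ≠ 0} = {z : ℤ | 1 ≤ z} ∪ {z : ℤ | z ≤ -1} := by
    ext z; simp only [Set.mem_setOf_eq, Set.mem_union]; omega
  have hdisj : Disjoint {z : ℤ | 1 ≤ z} {z : ℤ | z ≤ -1} := by
    rw [Set.disjoint_left]
    intro z h1 h2
    simp only [Set.mem_setOf_eq] at h1 h2
    omega
  rw [hset, measure_union hdisj MeasurableSet.of_discrete, hneg, two_mul]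

end NonnegWalkAux

open NonnegWalkAux in
/-- there is `c₂ < ∞`, depending only on `c₀` and `ν`, such that for all
sufficiently large `β` and every integer `y ≥ 0`,
`∑_{m ≥ 1} P_{β,0}(Z_k ≥ 0 for all 1 ≤ k ≤ m, Z_m = y) ≤ c₂·(y+1)/p_β`. -/
theorem nonneg_walk_sum_bound (c₀ ν : ℝ) (hc₀ : 1 ≤ c₀) (hν : 0 < ν)
    (μW : ℝ → Measure ℤ) (hprob : ∀ β, IsProbabilityMeasure (μW β))
    (hsymm : ∀ β, Measure.map (fun z : ℤ => -z) (μW β) = μW β)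
    (hplo : ∀ β : ℝ, 0 < β →
      c₀⁻¹ * Real.exp (-β) ≤ ((μW β) {z : ℤ | z ≠ 0}).toReal)
    (hphi : ∀ β : ℝ, 0 < β →
      ((μW β) {z : ℤ | z ≠ 0}).toReal ≤ c₀ * Real.exp (-β))
    (htail : ∀ β : ℝ, 0 < β → ∀ z : ℤ, 2 ≤ |z| →
      ((μW β) {z}).toReal ≤
        ((μW β) {x : ℤ | x ≠ 0}).toReal * Real.exp (-ν * β * (|z| : ℤ))) :
    ∃ c₂ : ℝ, ∃ β₀ : ℝ, ∀ β : ℝ, β₀ ≤ β → ∀ y : ℕ,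
      ∑' m : ℕ, nonnegPathProb (μW β) (m + 1) (y : ℤ)
        ≤ ENNReal.ofReal (c₂ * ((y : ℝ) + 1) / ((μW β) {z : ℤ | z ≠ 0}).toReal) := by
  refine ⟨2, 1, fun β hβ y => ?_⟩
  have hβ0 : (0 : ℝ) < β := lt_of_lt_of_le one_pos hβ
  haveI := hprob β
  set μ := μW β with hμ
  set p := (μ {z : ℤ | z ≠ 0}).toReal with hp
  have hple : c₀⁻¹ * Real.exp (-β) ≤ p := hplo β hβ0
  have hc₀pos : (0 : ℝ) < c₀ := lt_of_lt_of_le one_pos hc₀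
  have hppos : (0 : ℝ) < p :=
    lt_of_lt_of_le (by positivity) hple
  have hnetop : μ {z : ℤ | z ≠ 0} ≠ ⊤ := measure_ne_top μ _
  have hμne : μ {z : ℤ | z ≠ 0} ≠ 0 := by
    intro h
    rw [hp, h, ENNReal.toReal_zero] at hppos
    exact lt_irrefl 0 hppos
  have h2u := half μ (hsymm β)
  set u := μ {z : ℤ | 1 ≤ z} with hu
  have hu0 : u ≠ 0 := by
    intro h
    rw [h, mul_zero] at h2u
    exact hμne h2u
  have hut : u ≠ ⊤ := measure_ne_top μ _
  have hy0 : (0 : ℤ) ≤ (y : ℤ) := Int.natCast_nonneg y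
  have hLHS : ∑' m : ℕ, nonnegPathProb μ (m + 1) (y : ℤ)
      = ∑' m : ℕ, PB μ (m + 1) (y : ℤ) :=
    tsum_congr fun m => nonnegPathProb_eq_PB μ (m + 1) (y : ℤ) hy0
  rw [hLHS]
  refine le_trans (tsum_PB_le μ (y : ℤ) hy0) ?_
  have hut_toReal : u.toReal = p / 2 := by
    have h : p = 2 * u.toReal := by
      rw [hp, h2u, ENNReal.toReal_mul]
      norm_num
    linarith
  have hupos : 0 < u.toReal := by rw [hut_toReal]; positivity
  have hinv : u⁻¹ = ENNReal.ofReal (u.toReal)⁻¹ := by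
    conv_lhs => rw [← ENNReal.ofReal_toReal hut]
    rw [ENNReal.ofReal_inv_of_pos hupos]
  rw [hinv]
  apply ENNReal.ofReal_le_ofReal
  rw [hut_toReal]
  rw [show ((p : ℝ) / 2)⁻¹ = 2 / p by rw [inv_div]]
  rw [div_le_div_iff₀ hppos hppos]
  have hy' : (0 : ℝ) ≤ (y : ℝ) := Nat.cast_nonneg y
  nlinarith
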